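/- Let χ be a primitive character mod 16 with associated odd integer c (where χ(5) = e^{2πi c/4}). Then G(χ,2^4) = 2^2 · χ(−c) · e^{−2πi c/16}. -/
import Mathlib


open Complex

/-- The Gauss sum `G(χ,q) = ∑_{x mod q} χ(x) e^{2πi x/q}`. -/
noncomputable def Gsum {q : ℕ} [NeZero q] (χ : DirichletCharacter ℂ q) : ℂ :=
  ∑ x : ZMod q, χ x * Complex.exp (2 * Real.pi * Complex.I * (x.val : ℂ) / q)

lemma aux16 (χ : DirichletCharacter ℂ 16) (c : ℕ) (hc : c = 1 ∨ c = 3)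
    (hχ5 : χ (5 : ZMod 16) = Complex.exp (2 * Real.pi * Complex.I * c / 4)) :
    Gsum χ = 4 * χ (-(c : ZMod 16)) *
      Complex.exp (-(2 * Real.pi * Complex.I * c) / 16) := by
  set ζ : ℂ := Complex.exp (2 * Real.pi * Complex.I / ((16:ℕ):ℂ)) with hζ
  have hζn : ∀ n : ℕ, Complex.exp (2 * Real.pi * Complex.I * (n:ℂ) / ((16:ℕ):ℂ)) = ζ ^ n := by
    intro n
    rw [hζ, ← Complex.exp_nat_mul]
    ring_nf
  have h8 : ζ ^ 8 = -1 := by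
    rw [← hζn 8, show (2 * Real.pi * Complex.I * ((8:ℕ):ℂ) / ((16:ℕ):ℂ)) = Real.pi * Complex.I by
      push_cast; ring, Complex.exp_pi_mul_I]
  have h5 : χ ((5:ℕ) : ZMod 16) = ζ ^ (4 * c) := by
    rw [show ((5:ℕ) : ZMod 16) = 5 by decide, hχ5, ← hζn (4 * c)]
    congr 1
    push_cast; ring
  set ε : ℂ := χ (-1 : ZMod 16) with hε
  have h9 : χ ((9:ℕ) : ZMod 16) = ζ ^ (4*c) * ζ ^ (4*c) := by
    rw [show ((9:ℕ) : ZMod 16) = (5:ℕ) * (5:ℕ) by decide, map_mul, h5]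
  have h13 : χ ((13:ℕ) : ZMod 16) = ζ ^ (4*c) * (ζ ^ (4*c) * ζ ^ (4*c)) := by
    rw [show ((13:ℕ) : ZMod 16) = (5:ℕ) * ((5:ℕ) * (5:ℕ)) by decide, map_mul, map_mul, h5]
  have h15 : χ ((15:ℕ) : ZMod 16) = ε := by
    rw [show ((15:ℕ) : ZMod 16) = -1 by decide, hε]
  have h11 : χ ((11:ℕ) : ZMod 16) = ε * ζ ^ (4*c) := by
    rw [show ((11:ℕ) : ZMod 16) = -1 * ((5:ℕ):ZMod 16) by decide, map_mul, h5, hε]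
  have h7 : χ ((7:ℕ) : ZMod 16) = ε * (ζ ^ (4*c) * ζ ^ (4*c)) := by
    rw [show ((7:ℕ) : ZMod 16) = -1 * (((5:ℕ):ZMod 16) * ((5:ℕ):ZMod 16)) by decide,
      map_mul, map_mul, h5, hε]
  have h3 : χ ((3:ℕ) : ZMod 16) = ε * (ζ ^ (4*c) * (ζ ^ (4*c) * ζ ^ (4*c))) := by
    rw [show ((3:ℕ) : ZMod 16) = -1 * (((5:ℕ):ZMod 16) * (((5:ℕ):ZMod 16) * ((5:ℕ):ZMod 16)))
      by decide, map_mul, map_mul, map_mul, h5, hε]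
  have heven : ∀ x : ZMod 16, ¬ IsUnit x → χ x = 0 := fun x hx => χ.map_nonunit hx
  have hsum : Gsum χ = ∑ i ∈ Finset.range 16,
      χ ((i:ℕ) : ZMod 16) * Complex.exp (2 * Real.pi * Complex.I * (i:ℂ) / ((16:ℕ):ℂ)) := by
    rw [Gsum]
    apply Finset.sum_nbij' (i := fun (x : ZMod 16) => x.val) (j := fun i => (i : ZMod 16))
    · intro a _; exact Finset.mem_range.mpr (ZMod.val_lt a)
    · intro a _; exact Finset.mem_univ _
    · intro a _; simp [ZMod.natCast_val, ZMod.cast_id]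
    · intro a ha; exact ZMod.val_natCast_of_lt (Finset.mem_range.mp ha)
    · intro a _; simp [ZMod.natCast_val, ZMod.cast_id]
  rw [hsum]
  simp only [Finset.sum_range_succ, Finset.sum_range_zero]
  rw [h9, h13, h15, h11, h7, h3, h5,
    heven _ (show ¬ IsUnit ((0:ℕ):ZMod 16) by decide),
    heven _ (show ¬ IsUnit ((2:ℕ):ZMod 16) by decide),
    heven _ (show ¬ IsUnit ((4:ℕ):ZMod 16) by decide),
    heven _ (show ¬ IsUnit ((6:ℕ):ZMod 16) by decide),
    heven _ (show ¬ IsUnit ((8:ℕ):ZMod 16) by decide),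
    heven _ (show ¬ IsUnit ((10:ℕ):ZMod 16) by decide),
    heven _ (show ¬ IsUnit ((12:ℕ):ZMod 16) by decide),
    heven _ (show ¬ IsUnit ((14:ℕ):ZMod 16) by decide),
    show ((1:ℕ):ZMod 16) = 1 by decide, map_one]
  rw [hζn 1, hζn 3, hζn 5, hζn 7, hζn 9, hζn 11, hζn 13, hζn 15]
  rcases hc with rfl | rfl
  · rw [show (-((1:ℕ) : ZMod 16)) = -1 by decide, ← hε,
      show Complex.exp (-(2 * Real.pi * Complex.I * ((1:ℕ):ℂ)) / 16) = ζ ^ 15 by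
        rw [← hζn 15, show (2 * Real.pi * Complex.I * ((15:ℕ):ℂ) / ((16:ℕ):ℂ))
            = -(2 * Real.pi * Complex.I * ((1:ℕ):ℂ)) / 16 + 2 * Real.pi * Complex.I by
          push_cast; ring, Complex.exp_add, Complex.exp_two_pi_mul_I, mul_one]]
    linear_combination (ζ + ζ^17) * h8
  · rw [show (-((3:ℕ) : ZMod 16)) = ((13:ℕ):ZMod 16) by decide, h13,
      show Complex.exp (-(2 * Real.pi * Complex.I * ((3:ℕ):ℂ)) / 16) = ζ ^ 13 by
        rw [← hζn 13, show (2 * Real.pi * Complex.I * ((13:ℕ):ℂ) / ((16:ℕ):ℂ))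
            = -(2 * Real.pi * Complex.I * ((3:ℕ):ℂ)) / 16 + 2 * Real.pi * Complex.I by
          push_cast; ring, Complex.exp_add, Complex.exp_two_pi_mul_I, mul_one]]
    linear_combination (ζ - ζ^9 + ε*ζ^15 + 2*ζ^17 - 2*ζ^25 + ε*ζ^31 + 3*ζ^33 - 3*ζ^41) * h8

theorem stmt12 (χ : DirichletCharacter ℂ (2 ^ 4)) (hχ : χ.IsPrimitive)
    -- c odd with χ(5) = e(c/4), 1 ≤ c ≤ 4
    (c : ℕ) (hcrange : 1 ≤ c ∧ c ≤ 4) (hcodd : Odd c)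
    (hχ5 : χ ((5 : ℕ) : ZMod (2 ^ 4)) =
      Complex.exp (2 * Real.pi * Complex.I * c / 4)) :
    Gsum χ = 2 ^ 2 * χ (-(c : ZMod (2 ^ 4))) *
      Complex.exp (-(2 * Real.pi * Complex.I * c) / 16) := by
  obtain ⟨k, hk⟩ := hcodd
  have hc : c = 1 ∨ c = 3 := by omega
  have h := aux16 χ c hc (by rw [show (5 : ZMod 16) = ((5:ℕ) : ZMod 16) by decide]; exact hχ5)
  rw [show ((2:ℂ)^2) = 4 by norm_num]
  exact h
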